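/- Let G be a graph with conductance Φ_G and let T be any HC tree of G with dense branch (A_0, ..., A_k), where A_0 is the root and each A_i satisfies vol(A_i) > vol(G)/2, with B_i the sibling of A_i. Then COST_G(T) ≥ (Φ_G/2) * sum_{i=1}^{k} |A_{i-1}| * vol(B_i), and also COST_G(T) ≥ (Φ_G/2) * |A_k| * vol(A_k). -/

import Mathlib

inductive HCTree (V : Type*) where
  | leaf : V → HCTree V
  | node : HCTree V → HCTree V → HCTree V

namespace HCTree

variable {V : Type*}

def leavesList : HCTree V → List V
  | .leaf v => [v]
  | .node l r => l.leavesList ++ r.leavesList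

variable [DecidableEq V]

def leaves : HCTree V → Finset V
  | .leaf v => {v}
  | .node l r => l.leaves ∪ r.leaves

/-- Number of leaves below the lowest common ancestor of `u` and `v`. -/
def lcaSize : HCTree V → V → V → ℕ
  | .leaf _, _, _ => 1
  | .node l r, u, v =>
    if u ∈ l.leaves ∧ v ∈ l.leaves then l.lcaSize u v
    else if u ∈ r.leaves ∧ v ∈ r.leaves then r.lcaSize u v
    else (l.leaves ∪ r.leaves).card

end HCTree

open Finset

variable {V : Type*} [Fintype V] [DecidableEq V]

noncomputable def deg (w : V → V → ℝ) (u : V) : ℝ := ∑ v, w u v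

noncomputable def volw (w : V → V → ℝ) (S : Finset V) : ℝ := ∑ u ∈ S, deg w u

noncomputable def cutw (w : V → V → ℝ) (S T : Finset V) : ℝ :=
  ∑ u ∈ S, ∑ v ∈ T, w u v

noncomputable def dasguptaCost (w : V → V → ℝ) (T : HCTree V) : ℝ :=
  (∑ u, ∑ v, w u v * (T.lcaSize u v : ℝ)) / 2

namespace HCTree

lemma leaves_eq_toFinset (t : HCTree V) : t.leaves = t.leavesList.toFinset := by
  induction t with
  | leaf v => simp [leaves, leavesList]
  | node l r ihl ihr => simp [leaves, leavesList, ihl, ihr]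

lemma nodup_left {l r : HCTree V} (h : (HCTree.node l r).leavesList.Nodup) :
    l.leavesList.Nodup := (List.nodup_append.mp h).1

lemma nodup_right {l r : HCTree V} (h : (HCTree.node l r).leavesList.Nodup) :
    r.leavesList.Nodup := (List.nodup_append.mp h).2.1

lemma disjoint_leaves {l r : HCTree V} (h : (HCTree.node l r).leavesList.Nodup) :
    Disjoint l.leaves r.leaves := by
  rw [leaves_eq_toFinset, leaves_eq_toFinset]
  exact List.disjoint_toFinset_iff_disjoint.mpr (List.nodup_append'.mp h).2.2

lemma leaves_node (l r : HCTree V) : (HCTree.node l r).leaves = l.leaves ∪ r.leaves := rfl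

lemma lcaSize_left {l r : HCTree V} {u v : V} (hu : u ∈ l.leaves) (hv : v ∈ l.leaves) :
    (HCTree.node l r).lcaSize u v = l.lcaSize u v := by
  simp [lcaSize, hu, hv]

lemma lcaSize_right {l r : HCTree V} {u v : V} (h : (HCTree.node l r).leavesList.Nodup)
    (hu : u ∈ r.leaves) (hv : v ∈ r.leaves) :
    (HCTree.node l r).lcaSize u v = r.lcaSize u v := by
  have hu' : u ∉ l.leaves := fun h' => Finset.disjoint_left.mp (disjoint_leaves h) h' hu
  simp [lcaSize, hu', hu, hv]

lemma lcaSize_split {l r : HCTree V} {u v : V} (h : (HCTree.node l r).leavesList.Nodup)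
    (hu : u ∈ l.leaves) (hv : v ∈ r.leaves) :
    (HCTree.node l r).lcaSize u v = (HCTree.node l r).leaves.card := by
  have hv' : v ∉ l.leaves := fun h' => Finset.disjoint_left.mp (disjoint_leaves h) h' hv
  have hu' : u ∉ r.leaves := fun h' => Finset.disjoint_left.mp (disjoint_leaves h) hu h'
  simp [lcaSize, hv', hu', leaves_node]

lemma lcaSize_split' {l r : HCTree V} {u v : V} (h : (HCTree.node l r).leavesList.Nodup)
    (hu : u ∈ r.leaves) (hv : v ∈ l.leaves) :
    (HCTree.node l r).lcaSize u v = (HCTree.node l r).leaves.card := by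
  have hu' : u ∉ l.leaves := fun h' => Finset.disjoint_left.mp (disjoint_leaves h) h' hu
  have hv' : v ∉ r.leaves := fun h' => Finset.disjoint_left.mp (disjoint_leaves h) hv h'
  simp [lcaSize, hu', hv', leaves_node]

end HCTree

/-- Lower bound on `COST_G(T)` from the dense branch
`(A_0, ..., A_k)` of `T` (each `A_i` of volume `> vol(G)/2`, `A_{i+1}` a child
of `A_i` with sibling `B_{i+1}`, `A_k` having both children of volume
`≤ vol(G)/2`), where `Φ` is a lower bound on the conductance of `G`:
`COST_G(T) ≥ (Φ/2) ∑_{i=1}^k |A_{i-1}| vol(B_i)` and also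
`COST_G(T) ≥ (Φ/2) |A_k| vol(A_k)`. -/
theorem dense_branch_cost_lower_bound
    (w : V → V → ℝ)
    (hsymm : ∀ u v, w u v = w v u)
    (hnonneg : ∀ u v, 0 ≤ w u v)
    (hself : ∀ u, w u u = 0)
    (Φ : ℝ) (hΦ0 : 0 ≤ Φ)
    (hΦ : ∀ A : Finset V, volw w A ≤ volw w Finset.univ / 2 →
        Φ * volw w A ≤ cutw w A Aᶜ)
    (T : HCTree V)
    (hleaves : T.leaves = Finset.univ)
    (hnodup : T.leavesList.Nodup)
    (k : ℕ)
    (A B : ℕ → HCTree V)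
    (hA0 : A 0 = T)
    (hchild : ∀ i < k,
      A i = .node (A (i + 1)) (B (i + 1)) ∨ A i = .node (B (i + 1)) (A (i + 1)))
    (hdense : ∀ i ≤ k, volw w Finset.univ / 2 < volw w (A i).leaves)
    (hlast : ∃ L R : HCTree V, A k = .node L R ∧
      volw w L.leaves ≤ volw w Finset.univ / 2 ∧
      volw w R.leaves ≤ volw w Finset.univ / 2) :
    Φ / 2 * ∑ i ∈ Finset.range k,
        ((A i).leaves.card : ℝ) * volw w (B (i + 1)).leaves
      ≤ dasguptaCost w T
    ∧ Φ / 2 * ((A k).leaves.card : ℝ) * volw w (A k).leaves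
      ≤ dasguptaCost w T := by
  classical
  -- nodup of each A i
  have hAnodup : ∀ i ≤ k, (A i).leavesList.Nodup := by
    intro i
    induction i with
    | zero => intro _; rw [hA0]; exact hnodup
    | succ n ih =>
      intro hn
      have hnk : n < k := hn
      have h1 : (A n).leavesList.Nodup := ih hnk.le
      rcases hchild n hnk with h | h <;> rw [h] at h1
      · exact HCTree.nodup_left h1
      · exact HCTree.nodup_right h1
  -- subset facts
  have hsubA : ∀ n < k, (A (n + 1)).leaves ⊆ (A n).leaves := by
    intro n hn
    rcases hchild n hn with h | h <;> rw [h, HCTree.leaves_node]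
    · exact Finset.subset_union_left
    · exact Finset.subset_union_right
  have hsubB : ∀ n < k, (B (n + 1)).leaves ⊆ (A n).leaves := by
    intro n hn
    rcases hchild n hn with h | h <;> rw [h, HCTree.leaves_node]
    · exact Finset.subset_union_right
    · exact Finset.subset_union_left
  have hdisjAB : ∀ n < k, Disjoint (A (n + 1)).leaves (B (n + 1)).leaves := by
    intro n hn
    have h1 := hAnodup n hn.le
    rcases hchild n hn with h | h <;> rw [h] at h1
    · exact HCTree.disjoint_leaves h1
    · exact (HCTree.disjoint_leaves h1).symm
  have hchain : ∀ j ≤ k, ∀ i ≤ j, (A j).leaves ⊆ (A i).leaves := by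
    intro j
    induction j with
    | zero => intro _ i hi; rw [Nat.le_zero.mp hi]
    | succ n ih =>
      intro hn i hi
      rcases Nat.lt_or_ge i (n + 1) with h' | h'
      · exact (hsubA n hn).trans (ih (Nat.le_of_succ_le hn) i (Nat.lt_succ_iff.mp h'))
      · rw [Nat.le_antisymm hi h']
  -- the key structural invariant, by induction along the dense branch
  have hP : ∀ i ≤ k, ∀ u ∈ (A i).leaves, ∀ v : V,
      (v ∈ (A i).leaves ∧ T.lcaSize u v = (A i).lcaSize u v) ∨
      (v ∉ (A i).leaves ∧ (A i).leaves.card ≤ T.lcaSize u v) := by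
    intro i
    induction i with
    | zero =>
      intro _ u hu v
      left
      rw [hA0, hleaves]
      exact ⟨Finset.mem_univ v, rfl⟩
    | succ n ih =>
      intro hn u hu v
      have hnk : n < k := hn
      have hAn : (A n).leavesList.Nodup := hAnodup n hnk.le
      have husub : u ∈ (A n).leaves := hsubA n hnk hu
      have hcard : (A (n + 1)).leaves.card ≤ (A n).leaves.card :=
        Finset.card_le_card (hsubA n hnk)
      rcases ih hnk.le u husub v with ⟨hv, heq⟩ | ⟨hv, hle⟩
      · by_cases hvA : v ∈ (A (n + 1)).leaves
        · -- recurse into the child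
          left
          refine ⟨hvA, ?_⟩
          rw [heq]
          rcases hchild n hnk with h | h <;> rw [h] at hAn ⊢
          · exact HCTree.lcaSize_left hu hvA
          · exact HCTree.lcaSize_right hAn hu hvA
        · -- v is in the sibling B (n+1); they split at A n
          right
          refine ⟨hvA, ?_⟩
          rw [heq]
          rcases hchild n hnk with h | h
          · have hvB : v ∈ (B (n + 1)).leaves := by
              rw [h, HCTree.leaves_node] at hv
              rcases Finset.mem_union.mp hv with h' | h'
              · exact absurd h' hvA
              · exact h'
            rw [h] at hAn ⊢
            rw [HCTree.lcaSize_split hAn hu hvB, ← h]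
            exact hcard
          · have hvB : v ∈ (B (n + 1)).leaves := by
              rw [h, HCTree.leaves_node] at hv
              rcases Finset.mem_union.mp hv with h' | h'
              · exact h'
              · exact absurd h' hvA
            rw [h] at hAn ⊢
            rw [HCTree.lcaSize_split' hAn hu hvB, ← h]
            exact hcard
      · right
        exact ⟨fun h' => hv (hsubA n hnk h'), le_trans hcard hle⟩
  -- lca lower bound for cuts at B (i+1)
  have hlca : ∀ i < k, ∀ u ∈ (B (i + 1)).leaves, ∀ v, v ∉ (B (i + 1)).leaves →
      (A i).leaves.card ≤ T.lcaSize u v := by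
    intro i hik u hu v hv
    have husub : u ∈ (A i).leaves := hsubB i hik hu
    rcases hP i hik.le u husub v with ⟨hvA, heq⟩ | ⟨_, hle⟩
    · rw [heq]
      have hAi := hAnodup i hik.le
      rcases hchild i hik with h | h
      · have hvL : v ∈ (A (i + 1)).leaves := by
          rw [h, HCTree.leaves_node] at hvA
          rcases Finset.mem_union.mp hvA with h' | h'
          · exact h'
          · exact absurd h' hv
        rw [h] at hAi ⊢
        rw [HCTree.lcaSize_split' hAi hu hvL, ← h]
      · have hvL : v ∈ (A (i + 1)).leaves := by
          rw [h, HCTree.leaves_node] at hvA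
          rcases Finset.mem_union.mp hvA with h' | h'
          · exact absurd h' hv
          · exact h'
        rw [h] at hAi ⊢
        rw [HCTree.lcaSize_split hAi hu hvL, ← h]
    · exact hle
  -- nonneg facts
  have hdegnn : ∀ u, 0 ≤ deg w u := fun u => Finset.sum_nonneg fun v _ => hnonneg u v
  have hvolnn : ∀ S : Finset V, 0 ≤ volw w S := fun S =>
    Finset.sum_nonneg fun u _ => hdegnn u
  have hvolmono : ∀ S : Finset V, volw w S ≤ volw w Finset.univ := fun S =>
    Finset.sum_le_sum_of_subset_of_nonneg (Finset.subset_univ S) fun u _ _ => hdegnn u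
  set f : V → V → ℝ := fun u v => w u v * (T.lcaSize u v : ℝ) with hf
  have hfnn : ∀ u v, 0 ≤ f u v := fun u v => mul_nonneg (hnonneg u v) (Nat.cast_nonneg _)
  -- generic step: from a per-pair lca bound to a cut bound
  have hstep : ∀ (c : ℕ) (S : Finset V),
      (∀ u ∈ S, ∀ v, v ∉ S → c ≤ T.lcaSize u v) →
      (c : ℝ) * cutw w S Sᶜ ≤ ∑ u ∈ S, ∑ v, f u v := by
    intro c S hc
    have h1 : (c : ℝ) * cutw w S Sᶜ = ∑ u ∈ S, ∑ v ∈ Sᶜ, (c : ℝ) * w u v := by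
      rw [cutw, Finset.mul_sum]
      exact Finset.sum_congr rfl fun u _ => Finset.mul_sum _ _ _
    rw [h1]
    calc ∑ u ∈ S, ∑ v ∈ Sᶜ, (c : ℝ) * w u v
        ≤ ∑ u ∈ S, ∑ v ∈ Sᶜ, f u v := by
          refine Finset.sum_le_sum fun u hu => Finset.sum_le_sum fun v hv => ?_
          have := hc u hu v (Finset.mem_compl.mp hv)
          exact (mul_comm (c : ℝ) (w u v)).le.trans
            (mul_le_mul_of_nonneg_left (Nat.cast_le.mpr this) (hnonneg u v))
      _ ≤ ∑ u ∈ S, ∑ v, f u v := by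
          refine Finset.sum_le_sum fun u _ => ?_
          exact Finset.sum_le_sum_of_subset_of_nonneg (Finset.subset_univ _)
            fun v _ _ => hfnn u v
  have hcost : dasguptaCost w T = (∑ u, ∑ v, f u v) / 2 := rfl
  -- volume of B (i+1) is small
  have hvolB : ∀ i < k, volw w (B (i + 1)).leaves ≤ volw w Finset.univ / 2 := by
    intro i hik
    have hsplit : volw w (A i).leaves
        = volw w (A (i + 1)).leaves + volw w (B (i + 1)).leaves := by
      have hd := hdisjAB i hik
      rcases hchild i hik with h | h <;> rw [h, HCTree.leaves_node, volw]
      · rw [Finset.sum_union hd]; rfl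
      · rw [Finset.sum_union hd.symm]; ring_nf; rw [add_comm]; rfl
    have h1 := hdense (i + 1) hik
    have h2 := hvolmono (A i).leaves
    linarith
  have hBB : ∀ i < k, ∀ j < k, i < j →
      Disjoint (B (i + 1)).leaves (B (j + 1)).leaves := by
    intro i hi j hj hij
    have hsub : (B (j + 1)).leaves ⊆ (A (i + 1)).leaves :=
      (hsubB j hj).trans (hchain j hj.le (i + 1) hij)
    exact ((hdisjAB i hi).mono_left hsub).symm
  constructor
  · -- first inequality
    have hsum1 : ∑ i ∈ Finset.range k,
        ((A i).leaves.card : ℝ) * cutw w (B (i + 1)).leaves ((B (i + 1)).leaves)ᶜ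
        ≤ ∑ u, ∑ v, f u v := by
      have hpd : (↑(Finset.range k) : Set ℕ).PairwiseDisjoint
          (fun i => (B (i + 1)).leaves) := by
        intro i hi j hj hij
        simp only [Finset.coe_range, Set.mem_Iio] at hi hj
        rcases Nat.lt_or_ge i j with h' | h'
        · exact hBB i hi j hj h'
        · exact (hBB j hj i hi (lt_of_le_of_ne h' (Ne.symm hij))).symm
      calc ∑ i ∈ Finset.range k,
          ((A i).leaves.card : ℝ) * cutw w (B (i + 1)).leaves ((B (i + 1)).leaves)ᶜ
          ≤ ∑ i ∈ Finset.range k, ∑ u ∈ (B (i + 1)).leaves, ∑ v, f u v := by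
            refine Finset.sum_le_sum fun i hi => ?_
            exact hstep _ _ (hlca i (Finset.mem_range.mp hi))
        _ = ∑ u ∈ (Finset.range k).biUnion (fun i => (B (i + 1)).leaves),
              ∑ v, f u v := (Finset.sum_biUnion hpd).symm
        _ ≤ ∑ u, ∑ v, f u v := Finset.sum_le_sum_of_subset_of_nonneg
              (Finset.subset_univ _) fun u _ _ => Finset.sum_nonneg fun v _ => hfnn u v
    rw [hcost, Finset.mul_sum]
    have hterm : ∀ i ∈ Finset.range k,
        Φ / 2 * (((A i).leaves.card : ℝ) * volw w (B (i + 1)).leaves)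
        ≤ ((A i).leaves.card : ℝ) * cutw w (B (i + 1)).leaves ((B (i + 1)).leaves)ᶜ / 2 := by
      intro i hi
      have hik := Finset.mem_range.mp hi
      have hΦi := hΦ _ (hvolB i hik)
      have hc : (0 : ℝ) ≤ ((A i).leaves.card : ℝ) := Nat.cast_nonneg _
      nlinarith [mul_le_mul_of_nonneg_left hΦi hc]
    calc ∑ i ∈ Finset.range k,
        Φ / 2 * (((A i).leaves.card : ℝ) * volw w (B (i + 1)).leaves)
        ≤ ∑ i ∈ Finset.range k,
            ((A i).leaves.card : ℝ) * cutw w (B (i + 1)).leaves ((B (i + 1)).leaves)ᶜ / 2 :=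
          Finset.sum_le_sum hterm
      _ = (∑ i ∈ Finset.range k,
            ((A i).leaves.card : ℝ) * cutw w (B (i + 1)).leaves ((B (i + 1)).leaves)ᶜ) / 2 :=
          (Finset.sum_div _ _ _).symm
      _ ≤ (∑ u, ∑ v, f u v) / 2 := by linarith
  · -- second inequality
    obtain ⟨L, R, hAk, hLvol, hRvol⟩ := hlast
    have hAknd : (A k).leavesList.Nodup := hAnodup k le_rfl
    have hAknd' : (HCTree.node L R).leavesList.Nodup := hAk ▸ hAknd
    have hLsub : L.leaves ⊆ (A k).leaves := by
      rw [hAk, HCTree.leaves_node]; exact Finset.subset_union_left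
    have hRsub : R.leaves ⊆ (A k).leaves := by
      rw [hAk, HCTree.leaves_node]; exact Finset.subset_union_right
    have hLR : Disjoint L.leaves R.leaves := HCTree.disjoint_leaves hAknd'
    have hlcaL : ∀ u ∈ L.leaves, ∀ v, v ∉ L.leaves →
        (A k).leaves.card ≤ T.lcaSize u v := by
      intro u hu v hv
      rcases hP k le_rfl u (hLsub hu) v with ⟨hvA, heq⟩ | ⟨_, hle⟩
      · rw [heq, hAk]
        have hvR : v ∈ R.leaves := by
          rw [hAk, HCTree.leaves_node] at hvA
          rcases Finset.mem_union.mp hvA with h' | h'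
          · exact absurd h' hv
          · exact h'
        rw [HCTree.lcaSize_split hAknd' hu hvR, ← hAk]
      · exact hle
    have hlcaR : ∀ u ∈ R.leaves, ∀ v, v ∉ R.leaves →
        (A k).leaves.card ≤ T.lcaSize u v := by
      intro u hu v hv
      rcases hP k le_rfl u (hRsub hu) v with ⟨hvA, heq⟩ | ⟨_, hle⟩
      · rw [heq, hAk]
        have hvL : v ∈ L.leaves := by
          rw [hAk, HCTree.leaves_node] at hvA
          rcases Finset.mem_union.mp hvA with h' | h'
          · exact h'
          · exact absurd h' hv
        rw [HCTree.lcaSize_split' hAknd' hu hvL, ← hAk]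
      · exact hle
    have hsum2 : ((A k).leaves.card : ℝ) * (cutw w L.leaves L.leavesᶜ
        + cutw w R.leaves R.leavesᶜ) ≤ ∑ u, ∑ v, f u v := by
      have h1 := hstep (A k).leaves.card L.leaves hlcaL
      have h2 := hstep (A k).leaves.card R.leaves hlcaR
      have h3 : ∑ u ∈ L.leaves, ∑ v, f u v + ∑ u ∈ R.leaves, ∑ v, f u v
          = ∑ u ∈ (A k).leaves, ∑ v, f u v := by
        rw [hAk, HCTree.leaves_node, Finset.sum_union hLR]
      have h4 : ∑ u ∈ (A k).leaves, ∑ v, f u v ≤ ∑ u, ∑ v, f u v :=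
        Finset.sum_le_sum_of_subset_of_nonneg (Finset.subset_univ _)
          fun u _ _ => Finset.sum_nonneg fun v _ => hfnn u v
      nlinarith
    have hvolAk : volw w (A k).leaves = volw w L.leaves + volw w R.leaves := by
      rw [hAk, HCTree.leaves_node, volw, Finset.sum_union hLR]; rfl
    have hΦL := hΦ _ hLvol
    have hΦR := hΦ _ hRvol
    have hc : (0 : ℝ) ≤ ((A k).leaves.card : ℝ) := Nat.cast_nonneg _
    rw [hcost]
    have hkey : Φ / 2 * ((A k).leaves.card : ℝ) * volw w (A k).leaves
        = (((A k).leaves.card : ℝ) * (Φ * volw w L.leaves + Φ * volw w R.leaves)) / 2 := by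
      rw [hvolAk]; ring
    have hmul := mul_le_mul_of_nonneg_left (add_le_add hΦL hΦR) hc
    linarith
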